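/- Let V be a nonempty finite type with n = Fintype.card V and E : Fin m → Sym2 V a multigraph on V. If G is decodable, then (n + 1) · m(G) ≤ 2m, where m(G) is the minimum cardinality of a loop cut of G. -/
import Mathlib


/-- `e` is a loop index at vertex `v`. -/
def IsLoopIdx {V : Type*} {m : ℕ} (E : Fin m → Sym2 V) (v : V) (e : Fin m) : Prop :=
  E e = Sym2.diag v

/-- `u` and `v` are connected in the multigraph `E` with the edge indices in `S` deleted. -/
def ConnectedMod {V : Type*} {m : ℕ} (E : Fin m → Sym2 V) (S : Finset (Fin m))
    (u v : V) : Prop :=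
  Relation.EqvGen (fun a b => ∃ e : Fin m, e ∉ S ∧ E e = s(a, b)) u v

/-- `G − S` is decodable: every vertex is connected in `G − S` to a vertex with a loop
outside `S`. -/
def DecodableMod {V : Type*} {m : ℕ} (E : Fin m → Sym2 V) (S : Finset (Fin m)) : Prop :=
  ∀ u : V, ∃ v : V, (∃ e : Fin m, e ∉ S ∧ IsLoopIdx E v e) ∧ ConnectedMod E S u v

def IsDecodable {V : Type*} {m : ℕ} (E : Fin m → Sym2 V) : Prop :=
  DecodableMod E ∅

/-- `c_x^G`: the number of `x`-element sets of edge indices whose deletion leaves a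
decodable graph. -/
noncomputable def cG {V : Type*} {m : ℕ} (E : Fin m → Sym2 V) (x : ℕ) : ℕ :=
  Set.ncard {S : Finset (Fin m) | S.card = x ∧ DecodableMod E S}

/-- `k_x^G = C(m,x) − c_x^G`. -/
noncomputable def kG {V : Type*} {m : ℕ} (E : Fin m → Sym2 V) (x : ℕ) : ℕ :=
  Nat.choose m x - cG E x

/-- `m(G)`: the minimum cardinality of a loop cut. -/
noncomputable def mCut {V : Type*} {m : ℕ} (E : Fin m → Sym2 V) : ℕ :=
  sInf {k : ℕ | ∃ S : Finset (Fin m), S.card = k ∧ ¬ DecodableMod E S}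

/-- incidence degree of `v` (a loop at `v` counts once). -/
noncomputable def dI {V : Type*} {m : ℕ} (E : Fin m → Sym2 V) (v : V) : ℕ :=
  Set.ncard {e : Fin m | v ∈ E e}

/-- `δ_I(G)`: the minimum incidence degree. -/
noncomputable def deltaI {V : Type*} {m : ℕ} (E : Fin m → Sym2 V) : ℕ :=
  sInf (Set.range (dI E))

/-- `L_G`: the number of loop indices. -/
noncomputable def LG {V : Type*} {m : ℕ} (E : Fin m → Sym2 V) : ℕ :=
  Set.ncard {e : Fin m | ∃ v : V, E e = Sym2.diag v}

/-- `δ_ℓ(v)`: the number of loop indices at `v`. -/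
noncomputable def loopsAt {V : Type*} {m : ℕ} (E : Fin m → Sym2 V) (v : V) : ℕ :=
  Set.ncard {e : Fin m | E e = Sym2.diag v}

/-- `Δ_ℓ(G)`: the maximum number of loops at a single vertex. -/
noncomputable def DeltaLoops {V : Type*} {m : ℕ} (E : Fin m → Sym2 V) : ℕ :=
  sSup (Set.range (loopsAt E))

/-- `κ_G`: the edge connectivity. -/
noncomputable def kappaG {V : Type*} {m : ℕ} (E : Fin m → Sym2 V) : ℕ :=
  sInf {k : ℕ | ∃ S : Finset (Fin m), S.card = k ∧ ∃ u v : V, ¬ ConnectedMod E S u v}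


private lemma mCut_le_dI {V : Type*} [Fintype V] {m : ℕ} (E : Fin m → Sym2 V) (v : V) :
    mCut E ≤ dI E v := by
  classical
  set S : Finset (Fin m) := Finset.univ.filter (fun e => v ∈ E e) with hS
  have hcard : S.card = dI E v := by
    simp [dI, Set.ncard_eq_toFinset_card', Set.toFinset_setOf, hS]
  apply Nat.sInf_le
  refine ⟨S, hcard, ?_⟩
  intro hdec
  obtain ⟨w, ⟨e, heS, hloop⟩, hconn⟩ := hdec v
  have key : ∀ a b : V, ConnectedMod E S a b → (a = v ↔ b = v) := by
    intro a b h
    induction h with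
    | rel a b hab =>
      obtain ⟨f, hfS, hf⟩ := hab
      constructor <;> intro h <;> subst h <;>
        exact absurd (Finset.mem_filter.mpr ⟨Finset.mem_univ _, by rw [hf]; simp⟩) hfS
    | refl a => rfl
    | symm a b _ ih => exact ih.symm
    | trans a b c _ _ ih1 ih2 => exact ih1.trans ih2
  have hwv : w = v := ((key v w hconn).mp rfl).symm ▸ rfl
  have : e ∈ S := by
    refine Finset.mem_filter.mpr ⟨Finset.mem_univ _, ?_⟩
    have : E e = Sym2.diag v := by rw [← hwv]; exact hloop
    rw [this]; simp [Sym2.diag]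
  exact heS this

private lemma mCut_le_LG {V : Type*} [Fintype V] [Nonempty V] {m : ℕ} (E : Fin m → Sym2 V) :
    mCut E ≤ LG E := by
  classical
  set S : Finset (Fin m) := Finset.univ.filter (fun e => ∃ v : V, E e = Sym2.diag v) with hS
  have hcard : S.card = LG E := by
    simp [LG, Set.ncard_eq_toFinset_card', Set.toFinset_setOf, hS]
  apply Nat.sInf_le
  refine ⟨S, hcard, ?_⟩
  intro hdec
  obtain ⟨w, ⟨e, heS, hloop⟩, _⟩ := hdec (Classical.arbitrary V)
  exact heS (Finset.mem_filter.mpr ⟨Finset.mem_univ _, ⟨w, hloop⟩⟩)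

private lemma sum_dI_add_LG {V : Type*} [Fintype V] {m : ℕ} (E : Fin m → Sym2 V) :
    (∑ v : V, dI E v) + LG E ≤ 2 * m := by
  classical
  have hdI : ∀ v : V, dI E v = ∑ e : Fin m, (if v ∈ E e then 1 else 0) := by
    intro v
    rw [dI, Set.ncard_eq_toFinset_card', Set.toFinset_setOf, Finset.card_filter]
  have hLG : LG E = ∑ e : Fin m, (if (∃ v : V, E e = Sym2.diag v) then 1 else 0) := by
    rw [LG, Set.ncard_eq_toFinset_card', Set.toFinset_setOf, Finset.card_filter]
  calc (∑ v : V, dI E v) + LG E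
      = ∑ e : Fin m, ((∑ v : V, if v ∈ E e then 1 else 0)
          + (if (∃ v : V, E e = Sym2.diag v) then 1 else 0)) := by
        rw [Finset.sum_add_distrib, ← Finset.sum_comm, hLG]
        simp [hdI]
    _ ≤ ∑ _e : Fin m, 2 := by
        apply Finset.sum_le_sum
        intro e _
        by_cases hl : ∃ v : V, E e = Sym2.diag v
        · obtain ⟨w, hw⟩ := hl
          have hmem : ∀ v : V, v ∈ E e ↔ v = w := by
            intro v
            rw [hw]
            simp [Sym2.diag, Sym2.mem_iff]
          have h1 : (∑ v : V, if v ∈ E e then 1 else 0) = 1 := by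
            simp only [hmem]
            simp [Finset.sum_ite_eq]
          rw [h1, if_pos ⟨w, hw⟩]
        · rw [if_neg hl, Nat.add_zero]
          obtain ⟨⟨a, b⟩, hab⟩ := Quot.exists_rep (E e)
          have hEe : E e = s(a, b) := hab.symm
          have h1 : (∑ v : V, if v ∈ E e then 1 else 0)
              = (Finset.univ.filter (fun v => v ∈ E e)).card :=
            (Finset.card_filter _ _).symm
          rw [h1]
          have hsub : (Finset.univ.filter (fun v => v ∈ E e)) ⊆ ({a, b} : Finset V) := by
            intro v hv
            simp only [Finset.mem_filter, hEe, Sym2.mem_iff] at hv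
            simpa using hv.2
          calc (Finset.univ.filter (fun v => v ∈ E e)).card
              ≤ ({a, b} : Finset V).card := Finset.card_le_card hsub
            _ ≤ 2 := Finset.card_le_two
    _ = 2 * m := by simp [Finset.sum_const, Fintype.card_fin, Nat.mul_comm]

theorem stmt6 {V : Type*} [Fintype V] [Nonempty V] {m : ℕ} (E : Fin m → Sym2 V)
    (hdec : IsDecodable E) :
    (Fintype.card V + 1) * mCut E ≤ 2 * m := by
  have h1 : Fintype.card V * mCut E ≤ ∑ v : V, dI E v := by
    calc Fintype.card V * mCut E = ∑ _v : V, mCut E := by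
          rw [Finset.sum_const, Finset.card_univ, smul_eq_mul]
      _ ≤ ∑ v : V, dI E v := Finset.sum_le_sum fun v _ => mCut_le_dI E v
  calc (Fintype.card V + 1) * mCut E = Fintype.card V * mCut E + mCut E := by ring
    _ ≤ (∑ v : V, dI E v) + LG E := Nat.add_le_add h1 (mCut_le_LG E)
    _ ≤ 2 * m := sum_dI_add_LG E
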